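/- arXiv:1908.04819 — 3 statements merged into one kernel-verified Lean document; each statement's English description precedes it below -/
import Mathlib

section
/- Let $R$ be a reduced Noetherian commutative ring, and let $M$ and $N$ be finitely generated $R$-modules such that $M_\mathfrak{p} \cong N_\mathfrak{p}$ for every minimal prime $\mathfrak{p}$ of $R$. Then there exists an element $c \in R$ not contained in any minimal prime of $R$, together with $R$-linear maps $\varphi: M \to N$ and $\psi: N \to M$, such that the cokernels of $\varphi$ and $\psi$ are both annihilated after localization at $c$ (i.e., $(\operatorname{coker}\varphi)_c = 0$ and $(\operatorname{coker}\psi)_c = 0$). -/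
open LocalizedModule

/-- In a reduced ring, an element of a minimal prime is killed by an element
outside that prime. -/
lemma ann_of_mem_minimalPrime {R : Type*} [CommRing R] [IsReduced R]
    {p : Ideal R} [hp : p.IsPrime] (hmin : p ∈ minimalPrimes R)
    {x : R} (hx : x ∈ p) : ∃ t ∈ p.primeCompl, t * x = 0 := by
  have hnil : IsNilpotent (algebraMap R (Localization p.primeCompl) x) := by
    have : Ring.KrullDimLE 0 (Localization.AtPrime p) := .of_isLocalization _ hmin _
    rw [Ring.KrullDimLE.isNilpotent_iff_mem_maximalIdeal]
    exact (IsLocalization.AtPrime.to_map_mem_maximal_iff _ p x).mpr hx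
  obtain ⟨n, hn⟩ := hnil
  rw [← map_pow] at hn
  obtain ⟨t, ht⟩ := (IsLocalization.map_eq_zero_iff p.primeCompl _ _).mp hn
  refine ⟨t, t.2, ?_⟩
  have h1 : ((t : R) * x) ^ (n + 1) = ((t : R) ^ n * x) * ((t : R) * x ^ n) := by ring
  rw [ht, mul_zero] at h1
  exact IsReduced.eq_zero _ ⟨n + 1, h1⟩

/-- From an isomorphism after localization at a prime `p`, produce a genuine linear map
which is "surjective up to multiplication by elements outside `p`". -/
lemma exists_hom_of_localized_iso {R : Type*} [CommRing R] [IsNoetherianRing R]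
    (M N : Type*) [AddCommGroup M] [Module R M] [AddCommGroup N] [Module R N]
    [Module.Finite R M] (p : Ideal R) [hp : p.IsPrime]
    (e : LocalizedModule p.primeCompl M ≃ₗ[Localization p.primeCompl]
      LocalizedModule p.primeCompl N) :
    ∃ f : M →ₗ[R] N, ∀ y : N, ∃ s ∈ p.primeCompl, s • y ∈ LinearMap.range f := by
  have hMfp : Module.FinitePresentation R M := Module.finitePresentation_of_finite R M
  set S := p.primeCompl
  let e' := e.restrictScalars R
  let g : M →ₗ[R] LocalizedModule S N := e'.toLinearMap ∘ₗ mkLinearMap S M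
  obtain ⟨f, s₀, hf⟩ :=
    Module.FinitePresentation.exists_lift_of_isLocalizedModule S (mkLinearMap S N) g
  refine ⟨f, fun y => ?_⟩
  obtain ⟨z, hz⟩ := e'.surjective (mk y 1)
  obtain ⟨m, t, rfl⟩ : ∃ m t, mk m t = z := by
    induction z using LocalizedModule.induction_on with | _ m t => exact ⟨m, t, rfl⟩
  have h0 : (mk m 1 : LocalizedModule S M) = (t : R) • mk m t := by
    rw [smul'_mk, ← Submonoid.smul_def, mk_cancel]
  have h1 : e' (mk m 1) = mk ((t : R) • y) 1 := by
    rw [h0, map_smul, hz, smul'_mk]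
  have h2 : mkLinearMap S N (f m) = mkLinearMap S N ((s₀ : R) • (t : R) • y) := by
    have hcf := LinearMap.congr_fun hf m
    simp only [LinearMap.comp_apply, LinearMap.smul_apply, g, LinearMap.coe_comp,
      Function.comp_apply, LinearEquiv.coe_coe] at hcf
    show mk (f m) 1 = mk ((s₀ : R) • (t : R) • y) 1
    have e0 : (mk (f m) 1 : LocalizedModule S N) = mkLinearMap S N (f m) := rfl
    rw [e0, hcf, Submonoid.smul_def, show (mkLinearMap S M) m = mk m 1 from rfl, h1, smul'_mk]
  obtain ⟨u, hu⟩ := IsLocalizedModule.exists_of_eq (S := S) (f := mkLinearMap S N) h2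
  rw [Submonoid.smul_def, Submonoid.smul_def] at hu
  refine ⟨(u : R) * (s₀ : R) * (t : R), mul_mem (mul_mem u.2 s₀.2) t.2, (u : R) • m, ?_⟩
  rw [map_smul, hu, mul_smul, mul_smul]

/-- Glue the maps at the various minimal primes into a single map that is
"surjective up to multiplication" at every minimal prime. -/
lemma exists_glued_hom {R : Type*} [CommRing R] [IsNoetherianRing R] [IsReduced R]
    (M N : Type*) [AddCommGroup M] [Module R M] [AddCommGroup N] [Module R N]
    [Module.Finite R M] [Module.Finite R N]
    (hiso : ∀ (p : Ideal R) (hp : p.IsPrime), p ∈ minimalPrimes R →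
      Nonempty (LocalizedModule p.primeCompl M ≃ₗ[Localization p.primeCompl]
        LocalizedModule p.primeCompl N)) :
    ∃ φ : M →ₗ[R] N, ∀ p ∈ minimalPrimes R, ∀ y : N,
      ∃ s, s ∉ p ∧ s • y ∈ LinearMap.range φ := by
  classical
  have hfin := minimalPrimes.finite_of_isNoetherianRing R
  set F : Finset (Ideal R) := hfin.toFinset with hF
  have hmemF : ∀ q : Ideal R, q ∈ F ↔ q ∈ minimalPrimes R := fun q => hfin.mem_toFinset
  have hprime : ∀ q ∈ F, q.IsPrime := fun q hq => ((hmemF q).mp hq).1.1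
  -- a map for each minimal prime
  have hf : ∀ q : F, ∃ f : M →ₗ[R] N, ∀ y : N,
      ∃ s, s ∉ (q : Ideal R) ∧ s • y ∈ LinearMap.range f := by
    rintro ⟨q, hq⟩
    have hq' := (hmemF q).mp hq
    have : q.IsPrime := hq'.1.1
    obtain ⟨e⟩ := hiso q this hq'
    obtain ⟨f, hf⟩ := exists_hom_of_localized_iso M N q e
    exact ⟨f, fun y => by obtain ⟨s, hs, hmem⟩ := hf y; exact ⟨s, hs, hmem⟩⟩
  choose f hfsurj using hf
  -- elements `a q` in every other minimal prime but not in `q`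
  have ha : ∀ q : F, ∃ a : R, a ∉ (q : Ideal R) ∧
      ∀ q' : F, q' ≠ q → a ∈ (q' : Ideal R) := by
    rintro ⟨q, hq⟩
    have hq' := (hmemF q).mp hq
    have hqp : q.IsPrime := hq'.1.1
    have hb : ∀ q' : F, ∃ b : R, b ∈ (q' : Ideal R) ∧ (q' ≠ (⟨q, hq⟩ : F) → b ∉ q) := by
      rintro ⟨q', hq''⟩
      by_cases h : (⟨q', hq''⟩ : F) = ⟨q, hq⟩
      · exact ⟨0, Submodule.zero_mem _, fun h' => absurd h h'⟩
      · have hq'' : q' ∈ minimalPrimes R := (hmemF q').mp hq''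
        have : ¬ q' ≤ q := by
          intro hle
          apply h
          have := hq'.2 ⟨hq''.1.1, bot_le⟩ hle
          exact Subtype.ext (le_antisymm hle this)
        obtain ⟨b, hb1, hb2⟩ := SetLike.not_le_iff_exists.mp this
        exact ⟨b, hb1, fun _ => hb2⟩
    choose b hb1 hb2 using hb
    by_cases hcase : ∀ q' : F, q' = (⟨q, hq⟩ : F)
    · -- q is the only minimal prime
      exact ⟨1, hqp.ne_top ∘ (Ideal.eq_top_iff_one q).mpr, fun q' hq' => absurd (hcase q') hq'⟩
    · refine ⟨∏ q' ∈ Finset.univ.erase (⟨q, hq⟩ : F), b q', ?_, ?_⟩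
      · intro hmem
        obtain ⟨q', hq1, hq2⟩ := Ideal.IsPrime.prod_mem_iff.mp hmem
        exact hb2 q' (Finset.ne_of_mem_erase hq1) hq2
      · intro q' hne
        rw [← Finset.mul_prod_erase _ _ (Finset.mem_erase.mpr ⟨hne, Finset.mem_univ q'⟩)]
        exact Ideal.mul_mem_right _ _ (hb1 q')
  choose a ha1 ha2 using ha
  refine ⟨∑ q : F, a q • f q, ?_⟩
  intro p hpmin y
  have hpF : p ∈ F := (hmemF p).mpr hpmin
  have hpp : p.IsPrime := hpmin.1.1
  set pF : F := ⟨p, hpF⟩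
  obtain ⟨s, hs, m, hm⟩ := hfsurj pF y
  -- kill the coefficients `a q`, `q ≠ p`, by elements outside `p`
  have ht : ∀ q : F, ∃ t : R, t ∈ p.primeCompl ∧ (q ≠ pF → t * a q = 0) := by
    intro q
    by_cases h : q = pF
    · exact ⟨1, (Submonoid.one_mem _), fun h' => absurd h h'⟩
    · have haq : a q ∈ p := ha2 q pF (Ne.symm h)
      obtain ⟨t, ht1, ht2⟩ := ann_of_mem_minimalPrime hpmin haq
      exact ⟨t, ht1, fun _ => ht2⟩
  choose t ht1 ht2 using ht
  set T : R := ∏ q : F, t q with hT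
  have hTmem : T ∈ p.primeCompl := Submonoid.prod_mem _ (fun q _ => ht1 q)
  have hTkill : ∀ q : F, q ≠ pF → a q * T = 0 := by
    intro q hq
    rw [hT, ← Finset.mul_prod_erase _ _ (Finset.mem_univ q), ← mul_assoc,
      mul_comm (a q) (t q), ht2 q hq, zero_mul]
  refine ⟨T * a pF * s, mul_mem (mul_mem hTmem (ha1 pF)) hs, T • m, ?_⟩
  rw [map_smul, LinearMap.sum_apply]
  simp only [LinearMap.smul_apply]
  rw [Finset.smul_sum, Finset.sum_eq_single pF]
  · rw [hm, ← mul_smul, ← mul_smul]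
  · intro q _ hq
    rw [← mul_smul, mul_comm T (a q), hTkill q hq, zero_smul]
  · intro h
    exact absurd (Finset.mem_univ pF) h

/-- Turn the "surjective up to multiplication" property at a prime `p`
into non-containment of the annihilator of the cokernel in `p`. -/
lemma ann_coker_not_le {R : Type*} [CommRing R]
    (N : Type*) [AddCommGroup N] [Module R N] [Module.Finite R N]
    {M : Type*} [AddCommGroup M] [Module R M]
    (φ : M →ₗ[R] N) (p : Ideal R) [hp : p.IsPrime]
    (h : ∀ y : N, ∃ s, s ∉ p ∧ s • y ∈ LinearMap.range φ) :
    ∃ s ∈ Module.annihilator R (N ⧸ LinearMap.range φ), s ∉ p := by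
  have hsub : Subsingleton (LocalizedModule p.primeCompl (N ⧸ LinearMap.range φ)) := by
    rw [LocalizedModule.subsingleton_iff]
    intro m
    obtain ⟨y, rfl⟩ := Submodule.Quotient.mk_surjective _ m
    obtain ⟨s, hs, hmem⟩ := h y
    exact ⟨s, hs, by rw [← Submodule.Quotient.mk_smul, Submodule.Quotient.mk_eq_zero]; exact hmem⟩
  have hns : (⟨p, hp⟩ : PrimeSpectrum R) ∉ Module.support R (N ⧸ LinearMap.range φ) :=
    Module.notMem_support_iff.mpr hsub
  rw [Module.support_eq_zeroLocus, PrimeSpectrum.mem_zeroLocus] at hns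
  obtain ⟨s, hs1, hs2⟩ := Set.not_subset.mp hns
  exact ⟨s, hs1, hs2⟩

/-- Let `R` be a reduced Noetherian ring and `M`, `N` finitely generated `R`-modules that
become isomorphic after localization at every minimal prime of `R`.  Then there is an
element `c` outside every minimal prime and `R`-linear maps `φ : M → N`, `ψ : N → M`
whose cokernels vanish after localizing at `c`. -/
theorem stmt1 {R : Type*} [CommRing R] [IsNoetherianRing R] [IsReduced R]
    (M N : Type*) [AddCommGroup M] [Module R M] [AddCommGroup N] [Module R N]
    [Module.Finite R M] [Module.Finite R N]
    (hiso : ∀ (p : Ideal R) (hp : p.IsPrime), p ∈ minimalPrimes R →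
      Nonempty (LocalizedModule p.primeCompl M ≃ₗ[Localization p.primeCompl]
        LocalizedModule p.primeCompl N)) :
    ∃ c : R, (∀ p ∈ minimalPrimes R, c ∉ p) ∧
      ∃ (φ : M →ₗ[R] N) (ψ : N →ₗ[R] M),
        Subsingleton (LocalizedModule (Submonoid.powers c) (N ⧸ LinearMap.range φ)) ∧
        Subsingleton (LocalizedModule (Submonoid.powers c) (M ⧸ LinearMap.range ψ)) := by
  classical
  obtain ⟨φ, hφ⟩ := exists_glued_hom M N hiso
  obtain ⟨ψ, hψ⟩ := exists_glued_hom N M (fun p hp hmin => ⟨(hiso p hp hmin).some.symm⟩)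
  set Jφ := Module.annihilator R (N ⧸ LinearMap.range φ)
  set Jψ := Module.annihilator R (M ⧸ LinearMap.range ψ)
  have hfin := minimalPrimes.finite_of_isNoetherianRing R
  set F : Finset (Ideal R) := hfin.toFinset with hF
  have hmemF : ∀ q : Ideal R, q ∈ F ↔ q ∈ minimalPrimes R := fun q => hfin.mem_toFinset
  -- for each minimal prime there is an element of `Jφ ⊓ Jψ` outside it
  have hwit : ∀ p ∈ F, ∃ x ∈ Jφ ⊓ Jψ, x ∉ p := by
    intro p hpF
    have hpmin := (hmemF p).mp hpF
    have hpp : p.IsPrime := hpmin.1.1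
    obtain ⟨s, hs1, hs2⟩ := ann_coker_not_le N φ p (hφ p hpmin)
    obtain ⟨u, hu1, hu2⟩ := ann_coker_not_le M ψ p (hψ p hpmin)
    refine ⟨s * u, ⟨Ideal.mul_mem_right _ _ hs1, Ideal.mul_mem_left _ _ hu1⟩, ?_⟩
    intro hmem
    rcases hpp.mem_or_mem hmem with h | h
    · exact hs2 h
    · exact hu2 h
  -- prime avoidance
  have havoid : ¬ ((Jφ ⊓ Jψ : Ideal R) : Set R) ⊆ ⋃ q ∈ (↑F : Set (Ideal R)), (q : Set R) := by
    intro hsub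
    rw [Ideal.subset_union_prime (⊤ : Ideal R) (⊤ : Ideal R)
      (fun i hi _ _ => ((hmemF i).mp hi).1.1)] at hsub
    obtain ⟨q, hqF, hle⟩ := hsub
    obtain ⟨x, hx1, hx2⟩ := hwit q hqF
    exact hx2 (hle hx1)
  obtain ⟨c, hc1, hc2⟩ := Set.not_subset.mp havoid
  have hcnot : ∀ p ∈ minimalPrimes R, c ∉ p := by
    intro p hp hcp
    exact hc2 (Set.mem_biUnion (Finset.mem_coe.mpr ((hmemF p).mpr hp)) hcp)
  refine ⟨c, hcnot, φ, ψ, ?_, ?_⟩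
  · rw [LocalizedModule.subsingleton_iff]
    intro m
    exact ⟨c, Submonoid.mem_powers c, Module.mem_annihilator.mp hc1.1 m⟩
  · rw [LocalizedModule.subsingleton_iff]
    intro m
    exact ⟨c, Submonoid.mem_powers c, Module.mem_annihilator.mp hc1.2 m⟩
end

section
/- Let $A \to R$ be a flat ring homomorphism of Noetherian $F$-finite rings of prime characteristic $p > 0$, where $A$ is a domain with fraction field $K$ such that $[K^{1/p}:K]$ is finite. Then for any minimal prime ideal $\mathfrak{q}$ of $R$, the localization $(R \otimes_A A^{1/p})_{\mathfrak{q}}$ is a free module over $R_{\mathfrak{q}}$ of rank $[K^{1/p}:K]$. -/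
open Module IsLocalRing

section Frob

/-- `F^e_* M`: the abelian group `M` with `R`-module structure restricted along the
`e`-th iterated Frobenius of `R`. -/
def FrobMod (p e : ℕ) (R M : Type*) : Type _ := M

instance FrobMod.addCommGroup {p e : ℕ} {R M : Type*} [AddCommGroup M] :
    AddCommGroup (FrobMod p e R M) :=
  inferInstanceAs (AddCommGroup M)

noncomputable instance FrobMod.module {p e : ℕ} {R M : Type*} [CommRing R] [ExpChar R p]
    [AddCommGroup M] [Module R M] : Module R (FrobMod p e R M) :=
  Module.compHom M (iterateFrobenius R p e)

/-- `F^e_* B` (a.k.a. `B^{1/p^e}`) as a ring. -/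
def FrobAlg (p e : ℕ) (B : Type*) : Type _ := B

instance FrobAlg.commRing {p e : ℕ} {B : Type*} [CommRing B] : CommRing (FrobAlg p e B) :=
  inferInstanceAs (CommRing B)

/-- If `B` is an `A`-algebra, then `F^e_* B` is an `A`-algebra via `A → B` composed with
the `e`-th iterated Frobenius of `B`. -/
noncomputable instance FrobAlg.algebra {p e : ℕ} {A B : Type*} [CommRing A] [CommRing B]
    [Algebra A B] [ExpChar B p] : Algebra A (FrobAlg p e B) :=
  ((iterateFrobenius B p e).comp (algebraMap A B)).toAlgebra

/-- The `p`-degree `[k^{1/p^e} : k]` of a ring `k` of characteristic `p`. -/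
noncomputable def pDeg (p e : ℕ) (k : Type*) [CommRing k] [ExpChar k p] : ℕ :=
  Module.finrank k (FrobAlg p e k)

/-- The length of an `R`-module `M`, as the Krull dimension of its submodule lattice. -/
noncomputable def modLength (R M : Type*) [CommRing R] [AddCommGroup M] [Module R M] :
    WithBot ℕ∞ :=
  Order.krullDim (Submodule R M)

/-- The minimal number of generators of an `R`-module `M`. -/
noncomputable def minGens (R M : Type*) [CommRing R] [AddCommGroup M] [Module R M] : ℕ :=
  sInf {n : ℕ | ∃ s : Finset M, s.card = n ∧ Submodule.span R (s : Set M) = ⊤}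

/-- The bracket power `I^{[p^e]}`. -/
noncomputable def bracketPow {R : Type*} [CommRing R] (p e : ℕ) [ExpChar R p] (I : Ideal R) :
    Ideal R :=
  I.map (iterateFrobenius R p e)

end Frob


section Aux

open TensorProduct

/-- The identity ring equivalence between `F^e_* B` and `B`. -/
def FrobAlg.down (p e : ℕ) (B : Type*) [CommRing B] : FrobAlg p e B ≃+* B := RingEquiv.refl B

theorem FrobAlg.down_smul {p e : ℕ} {A B : Type*} [CommRing A] [CommRing B] [Algebra A B]
    [ExpChar B p] (a : A) (b : FrobAlg p e B) :
    FrobAlg.down p e B (a • b) = (algebraMap A B a) ^ p ^ e * FrobAlg.down p e B b := by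
  rw [Algebra.smul_def, map_mul]
  rfl

/-- A regular element is outside every minimal prime. -/
theorem mem_primeCompl_of_isSMulRegular {R : Type*} [CommRing R] {q : Ideal R} [q.IsPrime]
    (hq : q ∈ minimalPrimes R) {x : R} (hx : IsSMulRegular R x) : x ∈ q.primeCompl := by
  intro hmem
  have h1 : algebraMap R (Localization q.primeCompl) x ∈
      IsLocalRing.maximalIdeal (Localization q.primeCompl) :=
    (IsLocalization.AtPrime.to_map_mem_maximal_iff _ q x).mpr hmem
  obtain ⟨n, hn⟩ : IsNilpotent (algebraMap R (Localization q.primeCompl) x) := by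
    have := IsLocalization.subsingleton_primeSpectrum_of_mem_minimalPrimes q hq
      (Localization q.primeCompl)
    refine nilpotent_iff_mem_prime.mpr fun J hJ => ?_
    have hJm := congrArg PrimeSpectrum.asIdeal (Subsingleton.elim (⟨J, hJ⟩ : PrimeSpectrum _)
      ⟨IsLocalRing.maximalIdeal (Localization q.primeCompl), inferInstance⟩)
    simp only at hJm
    rw [hJm]
    exact h1
  rw [← map_pow] at hn
  obtain ⟨s, hs⟩ := (IsLocalization.map_eq_zero_iff q.primeCompl _ _).mp hn
  have h2 : x ^ n • (s : R) = x ^ n • (0 : R) := by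
    simpa [smul_eq_mul, mul_comm] using hs
  have h3 : (s : R) = 0 := (hx.pow n) h2
  exact s.2 (h3 ▸ q.zero_mem)

/-- A flat algebra over a domain is torsion-free. -/
theorem isSMulRegular_of_flat {A R : Type*} [CommRing A] [IsDomain A] [CommRing R] [Algebra A R]
    [Module.Flat A R] {a : A} (ha : a ≠ 0) : IsSMulRegular R a := by
  have hAa : IsSMulRegular A a := by
    intro x y hxy
    have hxy' : a * x = a * y := hxy
    exact mul_left_cancel₀ ha hxy'
  have h1 : IsSMulRegular (R ⊗[A] A) a := hAa.lTensor (M := R)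
  intro x y hxy
  have hxy' : a • x = a • y := hxy
  have h2 : (TensorProduct.rid A R).symm (a • x) = (TensorProduct.rid A R).symm (a • y) := by
    rw [hxy']
  rw [map_smul, map_smul] at h2
  exact (TensorProduct.rid A R).symm.injective (h1 h2)

/-- The natural `A`-linear map `A^{1/p} → K^{1/p}`. -/
noncomputable def frobToFrac (p : ℕ) (A : Type*) [CommRing A] [IsDomain A]
    [ExpChar A p] [ExpChar (FractionRing A) p] :
    FrobAlg p 1 A →ₗ[A] FrobAlg p 1 (FractionRing A) where
  toFun b := (FrobAlg.down p 1 (FractionRing A)).symm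
    (algebraMap A (FractionRing A) (FrobAlg.down p 1 A b))
  map_add' x y := by rw [map_add, map_add, map_add]
  map_smul' a b := by
    apply (FrobAlg.down p 1 (FractionRing A)).injective
    simp only [RingHom.id_apply, FrobAlg.down_smul, RingEquiv.apply_symm_apply, map_mul,
      map_pow, Algebra.algebraMap_self, RingHom.id_apply]

theorem frobToFrac_down {p : ℕ} {A : Type*} [CommRing A] [IsDomain A]
    [ExpChar A p] [ExpChar (FractionRing A) p] (b : FrobAlg p 1 A) :
    FrobAlg.down p 1 (FractionRing A) (frobToFrac p A b)
      = algebraMap A (FractionRing A) (FrobAlg.down p 1 A b) :=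
  RingEquiv.apply_symm_apply _ _

theorem frobToFrac_isLocalizedModule (p : ℕ) [Fact p.Prime] (A : Type*) [CommRing A] [IsDomain A]
    [CharP A p] [CharP (FractionRing A) p] :
    IsLocalizedModule (nonZeroDivisors A) (frobToFrac p A) := by
  set K := FractionRing A
  set D := FrobAlg.down p 1 K
  have hinj : Function.Injective (algebraMap A K) := IsFractionRing.injective A K
  constructor
  · intro s
    rw [Module.End.isUnit_iff]
    have hc : (algebraMap A K (s : A)) ^ p ^ 1 ≠ 0 :=
      pow_ne_zero _ (fun h => mem_nonZeroDivisors_iff_ne_zero.mp s.2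
        (hinj (h.trans (map_zero _).symm)))
    constructor
    · intro x y hxy
      have hxy0 : (s : A) • x = (s : A) • y := by
        simpa only [Module.algebraMap_end_apply] using hxy
      have hxy' : (algebraMap A K (s : A)) ^ p ^ 1 * D x
          = (algebraMap A K (s : A)) ^ p ^ 1 * D y := by
        rw [← FrobAlg.down_smul, ← FrobAlg.down_smul, hxy0]
      exact D.injective (mul_left_cancel₀ hc hxy')
    · intro y
      refine ⟨D.symm (((algebraMap A K (s : A)) ^ p ^ 1)⁻¹ * D y), ?_⟩
      simp only [Module.algebraMap_end_apply]
      apply D.injective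
      rw [FrobAlg.down_smul, RingEquiv.apply_symm_apply]
      exact mul_inv_cancel_left₀ hc _
  · intro y
    obtain ⟨⟨a, s⟩, h⟩ := IsLocalization.surj (nonZeroDivisors A) (D y)
    refine ⟨⟨(FrobAlg.down p 1 A).symm (a * (s : A) ^ (p ^ 1 - 1)), s⟩, ?_⟩
    dsimp only
    show (s : A) • y = _
    apply D.injective
    rw [FrobAlg.down_smul, frobToFrac_down, RingEquiv.apply_symm_apply, map_mul, map_pow]
    have hp1 : p ^ 1 - 1 + 1 = p ^ 1 :=
      Nat.succ_pred_eq_of_pos (pow_pos (Fact.out : p.Prime).pos 1)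
    dsimp only at h
    calc (algebraMap A K (s : A)) ^ p ^ 1 * D y
        = (algebraMap A K (s : A)) ^ (p ^ 1 - 1 + 1) * D y := by rw [hp1]
      _ = algebraMap A K a * algebraMap A K (s : A) ^ (p ^ 1 - 1) := by
          rw [pow_succ, ← h]; ring
  · intro x₁ x₂ h
    refine ⟨1, ?_⟩
    have h1 : FrobAlg.down p 1 A x₁ = FrobAlg.down p 1 A x₂ := by
      apply hinj
      rw [← frobToFrac_down, ← frobToFrac_down, h]
    rw [(FrobAlg.down p 1 A).injective h1]

end Aux

/-- Let `A → R` be a flat map of Noetherian `F`-finite rings of characteristic `p > 0`,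
with `A` a domain with fraction field `K` such that `[K^{1/p} : K]` is finite.  Then for
any minimal prime `𝔮` of `R`, the localization `(R ⊗_A A^{1/p})_𝔮` is free over `R_𝔮` of
rank `[K^{1/p} : K]`. -/
theorem stmt7 (p : ℕ) [Fact p.Prime] (A R : Type*) [CommRing A] [CommRing R]
    [IsNoetherianRing A] [IsNoetherianRing R] [CharP A p] [CharP R p]
    [IsDomain A] [CharP (FractionRing A) p]
    [Module.Finite A (FrobAlg p 1 A)] [Module.Finite R (FrobAlg p 1 R)]
    [Module.Finite (FractionRing A) (FrobAlg p 1 (FractionRing A))]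
    [Algebra A R] [Module.Flat A R]
    (q : Ideal R) [q.IsPrime] (hq : q ∈ minimalPrimes R) :
    Module.Free (Localization q.primeCompl)
        (LocalizedModule q.primeCompl (TensorProduct A R (FrobAlg p 1 A))) ∧
      Module.finrank (Localization q.primeCompl)
          (LocalizedModule q.primeCompl (TensorProduct A R (FrobAlg p 1 A))) =
        pDeg p 1 (FractionRing A) := by
  classical
  set K := FractionRing A with hK
  set Rq := Localization q.primeCompl with hRq
  set N := FrobAlg p 1 A with hN
  set FK := FrobAlg p 1 K with hFK
  set M := TensorProduct A R N with hM
  -- every nonzero element of A maps to the prime complement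
  have hreg : ∀ a : A, a ≠ 0 → algebraMap A R a ∈ q.primeCompl := fun a ha =>
    mem_primeCompl_of_isSMulRegular hq
      ((isSMulRegular_algebraMap_iff (M := R) (A := R) (r := a)).mpr (isSMulRegular_of_flat ha))
  have hunit : ∀ s : nonZeroDivisors A, IsUnit (algebraMap A Rq s) := by
    intro s
    rw [IsScalarTower.algebraMap_apply A R Rq]
    exact IsLocalization.map_units Rq
      ⟨algebraMap A R s, hreg s (mem_nonZeroDivisors_iff_ne_zero.mp s.2)⟩
  letI : Algebra K Rq := (IsLocalization.lift (S := K) hunit).toAlgebra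
  haveI : IsScalarTower A K Rq := IsScalarTower.of_algebraMap_eq'
    (show algebraMap A Rq = (algebraMap K Rq).comp (algebraMap A K)
      from (IsLocalization.lift_comp hunit).symm)
  haveI : IsScalarTower K Rq Rq := IsScalarTower.right
  haveI : IsScalarTower A K FK := IsScalarTower.of_algebraMap_eq fun a => rfl
  haveI := frobToFrac_isLocalizedModule p A
  have e1 : TensorProduct A K N ≃ₗ[K] FK :=
    (IsLocalizedModule.isBaseChange (nonZeroDivisors A) K (frobToFrac p A)).equiv
  have e0 : TensorProduct R Rq M ≃ₗ[Rq] LocalizedModule q.primeCompl M :=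
    (IsLocalizedModule.isBaseChange q.primeCompl Rq
      (LocalizedModule.mkLinearMap q.primeCompl M)).equiv
  have e2 : TensorProduct R Rq M ≃ₗ[Rq] TensorProduct A Rq N :=
    TensorProduct.AlgebraTensorModule.cancelBaseChange A R Rq Rq N
  have e3 : TensorProduct A Rq N ≃ₗ[Rq] TensorProduct K Rq (TensorProduct A K N) :=
    (TensorProduct.AlgebraTensorModule.cancelBaseChange A K Rq Rq N).symm
  have e4 : TensorProduct K Rq (TensorProduct A K N) ≃ₗ[Rq] TensorProduct K Rq FK :=
    TensorProduct.AlgebraTensorModule.congr (LinearEquiv.refl Rq Rq) e1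
  have E : LocalizedModule q.primeCompl M ≃ₗ[Rq] TensorProduct K Rq FK :=
    e0.symm ≪≫ₗ e2 ≪≫ₗ e3 ≪≫ₗ e4
  haveI : Module.Free Rq (TensorProduct K Rq FK) := Module.Free.tensor (R := K) (S := Rq) (M := Rq) (N := FK)
  refine ⟨Module.Free.of_equiv E.symm, ?_⟩
  rw [E.finrank_eq]
  exact Module.finrank_baseChange
end

section
/- Let $\varphi: A \to R$ be a flat homomorphism of Noetherian rings of prime characteristic $p > 0$, with $A$ a domain with fraction field $K$. If the relative Frobenius $F_{R/A}: F_*A \otimes_A R \to F_* R$, $a \otimes r \mapsto \varphi(a) r^p$, is injective, then the generic fiber $R \otimes_A K$ is geometrically reduced over $K$. Conversely, if $R \otimes_A K$ is geometrically reduced over $K$, then $F_{R/A}$ is injective. -/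
open Module IsLocalRing

/-- The canonical ring isomorphism `F^e_* B ≃ B` (the identity on underlying sets). -/
def FrobAlg.equiv (p e : ℕ) (B : Type*) [CommRing B] : FrobAlg p e B ≃+* B :=
  RingEquiv.refl B

open TensorProduct in
/-- The relative Frobenius `F_{R/A} : F_* A ⊗_A R → F_* R`, `a ⊗ r ↦ φ(a) r^p`. -/
noncomputable def relFrob (p : ℕ) [Fact p.Prime] (A R : Type*) [CommRing A] [CommRing R]
    [Algebra A R] [CharP A p] [CharP R p] :
    TensorProduct A (FrobAlg p 1 A) R →ₐ[A] FrobAlg p 1 R :=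
  Algebra.TensorProduct.lift
    { toRingHom :=
        ((FrobAlg.equiv p 1 R).symm.toRingHom.comp
          ((algebraMap A R).comp (FrobAlg.equiv p 1 A).toRingHom))
      commutes' := fun a => by
        show algebraMap A R (iterateFrobenius A p 1 (algebraMap A A a)) =
          iterateFrobenius R p 1 (algebraMap A R a)
        simp [iterateFrobenius_def, frobenius_def, map_pow] }
    { toRingHom := (FrobAlg.equiv p 1 R).symm.toRingHom.comp (iterateFrobenius R p 1)
      commutes' := fun a => by
        show iterateFrobenius R p 1 (algebraMap A R a) =
          iterateFrobenius R p 1 (algebraMap A R a)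
        rfl }
    (fun _ _ => mul_comm _ _)

universe u v

open TensorProduct in
/-- A commutative algebra `S` over a field `K` is geometrically reduced if `L ⊗_K S` is
reduced for every field extension `L` of `K`. -/
def GeomReduced (K : Type u) (S : Type v) [Field K] [CommRing S] [Algebra K S] : Prop :=
  ∀ (L : Type (max u v)) [Field L] [Algebra K L], IsReduced (TensorProduct K L S)
section Aux
open TensorProduct

noncomputable instance FrobAlg.field {p e : ℕ} {K : Type*} [Field K] : Field (FrobAlg p e K) :=
  inferInstanceAs (Field K)

noncomputable instance FrobAlg.isScalarTower {p e : ℕ} {A B : Type*} [CommRing A] [CommRing B]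
    [Algebra A B] [ExpChar B p] : IsScalarTower A B (FrobAlg p e B) :=
  IsScalarTower.of_algebraMap_eq fun _ => rfl

/-- Functoriality of `F^e_*` on algebras. -/
noncomputable def FrobAlg.map {p e : ℕ} {A B C : Type*} [CommRing A] [CommRing B] [CommRing C]
    [Algebra A B] [Algebra A C] [ExpChar B p] [ExpChar C p] (f : B →ₐ[A] C) :
    FrobAlg p e B →ₐ[A] FrobAlg p e C where
  toRingHom := (FrobAlg.equiv p e C).symm.toRingHom.comp
    (f.toRingHom.comp (FrobAlg.equiv p e B).toRingHom)
  commutes' a := by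
    show f (iterateFrobenius B p e (algebraMap A B a)) = iterateFrobenius C p e (algebraMap A C a)
    rw [iterateFrobenius_def, iterateFrobenius_def, map_pow, AlgHom.commutes]

theorem relFrob_tmul (p : ℕ) [Fact p.Prime] (A R : Type*) [CommRing A] [CommRing R] [Algebra A R]
    [CharP A p] [CharP R p] (a : FrobAlg p 1 A) (r : R) :
    FrobAlg.equiv p 1 R (relFrob p A R (a ⊗ₜ[A] r)) =
      algebraMap A R (FrobAlg.equiv p 1 A a) * r ^ p := by
  rw [relFrob]
  show algebraMap A R (FrobAlg.equiv p 1 A a) * iterateFrobenius R p 1 r = _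
  rw [iterateFrobenius_one_apply]

end Aux
section FieldCase
open TensorProduct Finsupp

variable (p : ℕ) [Fact p.Prime] {K : Type u} [Field K] [CharP K p]
  {S : Type v} [CommRing S] [Algebra K S]

/-- Writing `x ∈ F_*K ⊗[K] S` in terms of a basis of `S`. -/
theorem frob_tensor_eq {ι : Type w} (b : Basis ι K S) (l : ι →₀ FrobAlg p 1 K) :
    Finsupp.linearCombination (FrobAlg p 1 K)
        (fun j : ι => (1 : FrobAlg p 1 K) ⊗ₜ[K] b j) l =
      l.sum fun j c => c ⊗ₜ[K] b j := by
  rw [Finsupp.linearCombination_apply]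
  refine Finsupp.sum_congr fun j _ => ?_
  rw [TensorProduct.smul_tmul', smul_eq_mul, mul_one]

theorem relFrob_sum_eq {ι : Type w} [CharP S p] (b : Basis ι K S) (l : ι →₀ FrobAlg p 1 K) :
    FrobAlg.equiv p 1 S (relFrob p K S (l.sum fun j c => c ⊗ₜ[K] b j)) =
      Finsupp.linearCombination K (fun j : ι => b j ^ p)
        (l.mapRange (FrobAlg.equiv p 1 K) (map_zero _)) := by
  rw [map_finsuppSum, map_finsuppSum, Finsupp.linearCombination_apply,
    Finsupp.sum_mapRange_index (g := l) (h := fun j c => c • (b j ^ p))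
      (fun _ => zero_smul _ _)]
  refine Finsupp.sum_congr fun j _ => ?_
  rw [relFrob_tmul, Algebra.smul_def]

theorem linIndep_of_relFrob_inj {ι : Type w} [CharP S p] (b : Basis ι K S)
    (h : Function.Injective (relFrob p K S)) :
    LinearIndependent K fun j : ι => b j ^ p := by
  rw [linearIndependent_iff]
  intro l hl
  set e := (FrobAlg.equiv p 1 K).symm with he
  set x : TensorProduct K (FrobAlg p 1 K) S := l.sum fun j c => e c ⊗ₜ[K] b j with hx
  have hx' : x = (l.mapRange e (map_zero _)).sum fun j c => c ⊗ₜ[K] b j := by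
    rw [hx, Finsupp.sum_mapRange_index (g := l) (h := fun j (c : FrobAlg p 1 K) => c ⊗ₜ[K] b j)
      (fun _ => TensorProduct.zero_tmul _ _)]
  have h1 : relFrob p K S x = 0 := by
    apply (FrobAlg.equiv p 1 S).injective
    rw [hx', relFrob_sum_eq, map_zero]
    have : (l.mapRange e (map_zero _)).mapRange (FrobAlg.equiv p 1 K) (map_zero _) = l := by
      ext j
      simp [Finsupp.mapRange_apply, he]
    rw [this, hl]
  have h2 : x = 0 := h (by rw [h1, map_zero])
  have hb : ⇑(b.baseChange (FrobAlg p 1 K)) = fun j : ι => (1 : FrobAlg p 1 K) ⊗ₜ[K] b j :=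
    funext fun j => Basis.baseChange_apply _ _ _
  have h3 : l.mapRange e (map_zero _) = 0 := by
    apply linearIndependent_iff.mp ((b.baseChange (FrobAlg p 1 K)).linearIndependent)
    rw [hb, frob_tensor_eq, ← hx', h2]
  ext j
  have := DFunLike.congr_fun h3 j
  rw [Finsupp.mapRange_apply] at this
  simpa using e.injective (by simpa using this)

theorem relFrob_inj_of_linIndep {ι : Type w} [CharP S p] (b : Basis ι K S)
    (hli : LinearIndependent K fun j : ι => b j ^ p) :
    Function.Injective (relFrob p K S) := by
  have key : ∀ x, relFrob p K S x = 0 → x = 0 := by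
    intro x hFx
    set bb := b.baseChange (FrobAlg p 1 K) with hbb
    have hb : ⇑bb = fun j : ι => (1 : FrobAlg p 1 K) ⊗ₜ[K] b j :=
      funext fun j => Basis.baseChange_apply _ _ _
    have hx : x = (bb.repr x).sum fun j c => c ⊗ₜ[K] b j := by
      conv_lhs => rw [← bb.linearCombination_repr x]
      rw [hb, frob_tensor_eq]
    have h0 : Finsupp.linearCombination K (fun j : ι => b j ^ p)
        ((bb.repr x).mapRange (FrobAlg.equiv p 1 K) (map_zero _)) = 0 := by
      rw [← relFrob_sum_eq, ← hx, hFx, map_zero]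
    have h1 := linearIndependent_iff.mp hli _ h0
    have h2 : bb.repr x = 0 := by
      ext j
      have := DFunLike.congr_fun h1 j
      rw [Finsupp.mapRange_apply] at this
      simpa using (FrobAlg.equiv p 1 K).injective (by simpa using this)
    rw [hx, h2, Finsupp.sum_zero_index]
  intro x y hxy
  have := key (x - y) (by rw [map_sub, hxy, sub_self])
  exact sub_eq_zero.mp this

end FieldCase
section FieldCase2
open TensorProduct Finsupp

variable (p : ℕ) [Fact p.Prime] {K : Type u} [Field K] [CharP K p]
  {S : Type v} [CommRing S] [Algebra K S]

theorem base_tensor_eq (L : Type x) [Field L] [Algebra K L] {ι : Type w} (v : ι → S)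
    (l : ι →₀ L) :
    Finsupp.linearCombination L (fun j : ι => (1 : L) ⊗ₜ[K] v j) l =
      l.sum fun j c => c ⊗ₜ[K] v j := by
  rw [Finsupp.linearCombination_apply]
  refine Finsupp.sum_congr fun j _ => ?_
  rw [TensorProduct.smul_tmul', smul_eq_mul, mul_one]

set_option maxHeartbeats 1000000 in
/-- The vectors `1 ⊗ w j` for a `K`-linearly independent family `w` are `L`-linearly
independent in `L ⊗[K] S`. -/
theorem linIndep_baseChange (L : Type x) [Field L] [Algebra K L] {ι : Type w} {w : ι → S}
    (hw : LinearIndependent K w) :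
    LinearIndependent L fun j : ι => (1 : L) ⊗ₜ[K] w j := by
  have hinj : Function.Injective ((Finsupp.linearCombination K w).baseChange L) := by
    rw [LinearMap.baseChange_eq_ltensor]
    exact Module.Flat.lTensor_preserves_injective_linearMap _
      (LinearIndependent.finsuppLinearCombination_injective hw)
  have hb : LinearIndependent L
      fun j : ι => ((Finsupp.basisSingleOne (R := K) (ι := ι)).baseChange L) j :=
    ((Finsupp.basisSingleOne (R := K)).baseChange L).linearIndependent
  have := hb.map' ((Finsupp.linearCombination K w).baseChange L)
    (LinearMap.ker_eq_bot.mpr hinj)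
  convert this using 2 with j
  simp [Function.comp, Basis.baseChange_apply, LinearMap.baseChange_tmul,
    Finsupp.linearCombination_single]
  all_goals rfl

theorem pow_p_eq_zero_imp {T : Type x} [CommRing T] (hp : ∀ y : T, y ^ p = 0 → y = 0) :
    IsReduced T := by
  constructor
  intro x hx
  obtain ⟨n, hn⟩ := hx
  have key : ∀ (m : ℕ) (y : T), y ^ p ^ m = 0 → y = 0 := by
    intro m
    induction m with
    | zero => intro y hy; simpa using hy
    | succ m ih =>
      intro y hy
      refine hp y (ih _ ?_)
      rw [← pow_mul, ← pow_succ']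
      exact hy
  refine key n x (pow_eq_zero_of_le (Nat.le_of_lt (Nat.lt_pow_self (n := n) ?_)) hn)
  exact (Fact.out : p.Prime).one_lt

theorem geomReduced_of_linIndep {ι : Type w} (b : Basis ι K S)
    (hli : LinearIndependent K fun j : ι => b j ^ p) :
    GeomReduced K S := by
  intro L _ _
  haveI : CharP L p := charP_of_injective_algebraMap (algebraMap K L).injective p
  refine pow_p_eq_zero_imp p ?_
  intro y hy
  rcases subsingleton_or_nontrivial (TensorProduct K L S) with hsub | hnt
  · exact Subsingleton.elim _ _
  haveI : CharP (TensorProduct K L S) p :=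
    charP_of_injective_ringHom (algebraMap L (TensorProduct K L S)).injective p
  set bb := b.baseChange L with hbb
  have hb : ⇑bb = fun j : ι => (1 : L) ⊗ₜ[K] b j :=
    funext fun j => Basis.baseChange_apply _ _ _
  set l := bb.repr y with hl
  have hy' : y = l.sum fun j c => c ⊗ₜ[K] b j := by
    conv_lhs => rw [← bb.linearCombination_repr y]
    rw [hb, base_tensor_eq]
  have hyp : (l.mapRange (fun c : L => c ^ p) (zero_pow (Fact.out : p.Prime).ne_zero)).sum
      (fun j c => c ⊗ₜ[K] (b j ^ p)) = 0 := by
    rw [Finsupp.sum_mapRange_index (g := l) (h := fun j (c : L) => c ⊗ₜ[K] (b j ^ p))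
      (fun _ => TensorProduct.zero_tmul _ _)]
    rw [← hy, hy', Finsupp.sum, Finsupp.sum, sum_pow_char]
    exact Finset.sum_congr rfl fun j _ => by rw [Algebra.TensorProduct.tmul_pow]
  have hw := linIndep_baseChange L hli
  have h0 : Finsupp.linearCombination L (fun j : ι => (1 : L) ⊗ₜ[K] (b j ^ p))
      (l.mapRange (fun c : L => c ^ p) (zero_pow (Fact.out : p.Prime).ne_zero)) = 0 := by
    rw [base_tensor_eq, hyp]
  have h1 := linearIndependent_iff.mp hw _ h0
  have h2 : l = 0 := by
    ext j
    have := DFunLike.congr_fun h1 j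
    rw [Finsupp.mapRange_apply] at this
    exact pow_eq_zero_iff (Fact.out : p.Prime).ne_zero |>.mp (by simpa using this)
  rw [hy', h2, Finsupp.sum_zero_index]

end FieldCase2
section FieldCase3
open TensorProduct Finsupp

variable (p : ℕ) [Fact p.Prime] {K : Type u} [Field K] [CharP K p]
  {S : Type v} [CommRing S] [Algebra K S]

theorem linIndep_of_geomReduced {ι : Type w} (b : Basis ι K S) (hgr : GeomReduced K S) :
    LinearIndependent K fun j : ι => b j ^ p := by
  rw [linearIndependent_iff]
  intro l hl
  haveI : CharP (FrobAlg p 1 K) p := (inferInstance : CharP K p)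
  set L := ULift.{max u v} (FrobAlg p 1 K) with hL
  haveI : CharP L p :=
    charP_of_injective_ringHom (f := ((ULift.ringEquiv (R := FrobAlg p 1 K)).symm : FrobAlg p 1 K ≃+* L).toRingHom) (RingEquiv.injective _) p
  haveI hred : IsReduced (TensorProduct K L S) := hgr L
  rcases subsingleton_or_nontrivial S with hsub | hnt
  · -- S is trivial, so ι is empty
    haveI : IsEmpty ι := by
      by_contra h
      rw [not_isEmpty_iff] at h
      obtain ⟨j⟩ := h
      exact b.ne_zero j (Subsingleton.elim _ _)
    exact Subsingleton.elim _ _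
  haveI : Nontrivial (ι →₀ L) := by
    haveI : Nonempty ι := by
      by_contra h
      haveI : IsEmpty ι := not_nonempty_iff.mp h
      exact (not_subsingleton S) b.repr.toEquiv.subsingleton
    infer_instance
  haveI : Nontrivial (TensorProduct K L S) := (b.baseChange L).repr.toEquiv.nontrivial
  haveI : CharP (TensorProduct K L S) p :=
    charP_of_injective_ringHom (algebraMap L (TensorProduct K L S)).injective p
  set e := (FrobAlg.equiv p 1 K).symm with he
  set y : TensorProduct K L S := l.sum fun j c => ULift.up (e c) ⊗ₜ[K] b j with hy
  have hup : ∀ c : K, (ULift.up (e c) : L) ^ p = algebraMap K L c := by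
    intro c
    have h1 : (ULift.up (e c) : L) ^ p = ULift.up ((e c) ^ p) := by
      exact (map_pow (ULift.ringEquiv (R := FrobAlg p 1 K)).symm (e c) p).symm ▸ rfl
    rw [h1, ULift.algebraMap_eq]
    congr 1
    apply (FrobAlg.equiv p 1 K).injective
    rw [← map_pow]
    show c ^ p = iterateFrobenius K p 1 c
    rw [iterateFrobenius_one_apply]
  have hyp : y ^ p = 0 := by
    rw [hy, Finsupp.sum, sum_pow_char]
    have : ∀ j ∈ l.support, (ULift.up (e (l j)) ⊗ₜ[K] b j) ^ p
        = (1 : L) ⊗ₜ[K] (l j • (b j ^ p)) := by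
      intro j _
      rw [Algebra.TensorProduct.tmul_pow, hup, Algebra.algebraMap_eq_smul_one,
        TensorProduct.smul_tmul]
    rw [Finset.sum_congr rfl this, ← TensorProduct.tmul_sum]
    have h4 : (∑ j ∈ l.support, l j • (b j ^ p)) = 0 := by
      simpa [Finsupp.linearCombination_apply, Finsupp.sum] using hl
    rw [h4, TensorProduct.tmul_zero]
  have hy0 : y = 0 := isNilpotent_iff_eq_zero.mp ⟨p, hyp⟩
  have hb : ⇑(b.baseChange L) = fun j : ι => (1 : L) ⊗ₜ[K] b j :=
    funext fun j => Basis.baseChange_apply _ _ _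
  have h3 : l.mapRange (fun c => ULift.up (e c) : K → L) (show ULift.up (e 0) = 0 by rw [map_zero]; rfl) = 0 := by
    apply linearIndependent_iff.mp ((b.baseChange L).linearIndependent)
    rw [hb, base_tensor_eq,
      Finsupp.sum_mapRange_index (g := l) (h := fun j (c : L) => c ⊗ₜ[K] b j)
        (fun _ => TensorProduct.zero_tmul _ _), ← hy, hy0]
  ext j
  have := DFunLike.congr_fun h3 j
  rw [Finsupp.mapRange_apply] at this
  have := congrArg ULift.down this
  exact e.injective (by simpa using this)

end FieldCase3
section Glue
open TensorProduct
set_option maxHeartbeats 1600000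
set_option synthInstance.maxHeartbeats 400000

variable (p : ℕ) [Fact p.Prime] (A R : Type*) [CommRing A] [CommRing R] [IsDomain A]
  [CharP A p] [CharP R p] [Algebra A R] [Module.Flat A R]

/-- `F_* A → F_* K`. -/
noncomputable def frobToFraction : FrobAlg p 1 A →ₐ[A] FrobAlg p 1 (FractionRing A) :=
  FrobAlg.map (Algebra.ofId A (FractionRing A))

/-- Comparison map `F_*A ⊗[A] R → F_*K ⊗[K] (K ⊗[A] R)`. -/
noncomputable def compMap : TensorProduct A (FrobAlg p 1 A) R →ₗ[A]
    TensorProduct (FractionRing A) (FrobAlg p 1 (FractionRing A))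
      (TensorProduct A (FractionRing A) R) :=
  (((TensorProduct.AlgebraTensorModule.cancelBaseChange A (FractionRing A) (FractionRing A)
      (FrobAlg p 1 (FractionRing A)) R).symm.toLinearMap).restrictScalars A).comp
    (LinearMap.rTensor R (frobToFraction p A).toLinearMap)

theorem compMap_tmul (a : FrobAlg p 1 A) (r : R) :
    compMap p A R (a ⊗ₜ[A] r) =
      (frobToFraction p A a) ⊗ₜ[FractionRing A] ((1 : FractionRing A) ⊗ₜ[A] r) := by
  simp [compMap, LinearMap.rTensor_tmul]

theorem frobAlg_equiv_map_apply {e : ℕ} {A' B C : Type*} [CommRing A'] [CommRing B] [CommRing C]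
    [Algebra A' B] [Algebra A' C] [ExpChar B p] [ExpChar C p] (f : B →ₐ[A'] C)
    (z : FrobAlg p e B) :
    FrobAlg.equiv p e C (FrobAlg.map (e := e) f z) = f (FrobAlg.equiv p e B z) := rfl

theorem frobToFraction_apply (a : FrobAlg p 1 A) :
    FrobAlg.equiv p 1 (FractionRing A) (frobToFraction p A a) =
      algebraMap A (FractionRing A) (FrobAlg.equiv p 1 A a) := rfl

theorem frob_smul_eq {K : Type*} [Field K] [CharP K p] (c : K) (m : FrobAlg p 1 K) :
    FrobAlg.equiv p 1 K (c • m) = c ^ p * FrobAlg.equiv p 1 K m := by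
  rw [Algebra.smul_def, map_mul]
  congr 1
  show iterateFrobenius K p 1 c = c ^ p
  rw [iterateFrobenius_one_apply]

variable [CharP (FractionRing A) p] [CharP (TensorProduct A (FractionRing A) R) p]

/-- `F_* (R → K ⊗ R)`. -/
noncomputable def psiF : FrobAlg p 1 R →ₐ[A] FrobAlg p 1 (TensorProduct A (FractionRing A) R) :=
  FrobAlg.map (Algebra.TensorProduct.includeRight
    (R := A) (A := FractionRing A) (B := R))

theorem psiF_apply (z : FrobAlg p 1 R) :
    FrobAlg.equiv p 1 (TensorProduct A (FractionRing A) R) (psiF p A R z) =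
      Algebra.TensorProduct.includeRight (R := A) (A := FractionRing A) (B := R)
        (FrobAlg.equiv p 1 R z) := rfl

theorem relFrob_compMap (x : TensorProduct A (FrobAlg p 1 A) R) :
    relFrob p (FractionRing A) (TensorProduct A (FractionRing A) R) (compMap p A R x) =
      psiF p A R (relFrob p A R x) := by
  induction x using TensorProduct.induction_on with
  | zero => simp
  | add x y ihx ihy => rw [map_add, map_add, map_add, map_add, ihx, ihy]
  | tmul a r =>
    apply (FrobAlg.equiv p 1 (TensorProduct A (FractionRing A) R)).injective
    rw [compMap_tmul, relFrob_tmul, psiF_apply, relFrob_tmul, frobToFraction_apply,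
      ← IsScalarTower.algebraMap_apply A (FractionRing A) (TensorProduct A (FractionRing A) R)]
    simp [map_mul, map_pow, Algebra.TensorProduct.includeRight_apply,
      Algebra.TensorProduct.tmul_pow]

theorem includeRight_inj : Function.Injective
    (Algebra.TensorProduct.includeRight (R := A) (A := FractionRing A) (B := R)) := by
  have h1 : Function.Injective
      (LinearMap.rTensor R (Algebra.linearMap A (FractionRing A))) :=
    Module.Flat.rTensor_preserves_injective_linearMap _ (IsFractionRing.injective A _)
  have h2 : ∀ r : R, (Algebra.TensorProduct.includeRight (R := A) (A := FractionRing A)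
      (B := R)) r
      = LinearMap.rTensor R (Algebra.linearMap A (FractionRing A))
          ((TensorProduct.lid A R).symm r) := by
    intro r
    rw [TensorProduct.lid_symm_apply, LinearMap.rTensor_tmul]
    simp
  intro x y hxy
  apply (TensorProduct.lid A R).symm.injective
  apply h1
  rw [← h2, ← h2, hxy]

theorem psiF_inj : Function.Injective (psiF p A R) := by
  intro x y hxy
  apply (FrobAlg.equiv p 1 R).injective
  apply includeRight_inj A R
  have := congrArg (FrobAlg.equiv p 1 (TensorProduct A (FractionRing A) R)) hxy
  rw [psiF_apply, psiF_apply] at this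
  exact this

theorem compMap_inj : Function.Injective (compMap p A R) := by
  have hincl : Function.Injective (frobToFraction p A).toLinearMap := by
    intro x y hxy
    apply (FrobAlg.equiv p 1 A).injective
    apply IsFractionRing.injective A (FractionRing A)
    exact congrArg (FrobAlg.equiv p 1 (FractionRing A)) hxy
  have h1 := Module.Flat.rTensor_preserves_injective_linearMap (M := R)
    (frobToFraction p A).toLinearMap hincl
  intro x y hxy
  apply h1
  have h2 := congrArg (TensorProduct.AlgebraTensorModule.cancelBaseChange A (FractionRing A)
    (FractionRing A) (FrobAlg p 1 (FractionRing A)) R) hxy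
  simp only [compMap, LinearMap.comp_apply, LinearMap.coe_restrictScalars,
    LinearEquiv.coe_coe, LinearEquiv.apply_symm_apply] at h2
  exact h2

theorem relFrobA_inj_of_relFrobK_inj
    (h : Function.Injective
      (relFrob p (FractionRing A) (TensorProduct A (FractionRing A) R))) :
    Function.Injective (relFrob p A R) := by
  intro x y hxy
  apply compMap_inj p A R
  apply h
  rw [relFrob_compMap, relFrob_compMap, hxy]

theorem exists_denominator
    (z : TensorProduct (FractionRing A) (FrobAlg p 1 (FractionRing A))
      (TensorProduct A (FractionRing A) R)) :
    ∃ (b : A) (y : TensorProduct A (FrobAlg p 1 A) R),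
      b ≠ 0 ∧ (algebraMap A (FractionRing A) b) • z = compMap p A R y := by
  induction z using TensorProduct.induction_on with
  | zero => exact ⟨1, 0, one_ne_zero, by simp⟩
  | add z1 z2 ih1 ih2 =>
    obtain ⟨b1, y1, h1, e1⟩ := ih1
    obtain ⟨b2, y2, h2, e2⟩ := ih2
    refine ⟨b1 * b2, b2 • y1 + b1 • y2, mul_ne_zero h1 h2, ?_⟩
    rw [smul_add, map_add, map_smul, map_smul,
      ← algebraMap_smul (FractionRing A) b2 (compMap p A R y1),
      ← algebraMap_smul (FractionRing A) b1 (compMap p A R y2), ← e1, ← e2,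
      smul_smul, smul_smul, ← map_mul, ← map_mul, mul_comm b2 b1]
  | tmul k s =>
    induction s using TensorProduct.induction_on with
    | zero => exact ⟨1, 0, one_ne_zero, by simp⟩
    | add s1 s2 ihs1 ihs2 =>
      obtain ⟨b1, y1, h1, e1⟩ := ihs1
      obtain ⟨b2, y2, h2, e2⟩ := ihs2
      refine ⟨b1 * b2, b2 • y1 + b1 • y2, mul_ne_zero h1 h2, ?_⟩
      rw [TensorProduct.tmul_add, smul_add, map_add, map_smul, map_smul,
        ← algebraMap_smul (FractionRing A) b2 (compMap p A R y1),
        ← algebraMap_smul (FractionRing A) b1 (compMap p A R y2), ← e1, ← e2,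
        smul_smul, smul_smul, ← map_mul, ← map_mul, mul_comm b2 b1]
    | tmul k' r =>
      have step : (k ⊗ₜ[FractionRing A] (k' ⊗ₜ[A] r)) =
          (k' • k) ⊗ₜ[FractionRing A] ((1 : FractionRing A) ⊗ₜ[A] r) := by
        rw [TensorProduct.smul_tmul, TensorProduct.smul_tmul', smul_eq_mul, mul_one]
      obtain ⟨⟨n, d⟩, hd⟩ := IsLocalization.surj (nonZeroDivisors A) (FrobAlg.equiv p 1
        (FractionRing A) (k' • k))
      refine ⟨d, (FrobAlg.equiv p 1 A).symm (d ^ (p - 1) * n) ⊗ₜ[A] r, by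
        simpa using nonZeroDivisors.ne_zero d.2, ?_⟩
      rw [step, compMap_tmul, TensorProduct.smul_tmul']
      congr 1
      apply (FrobAlg.equiv p 1 (FractionRing A)).injective
      rw [frob_smul_eq, frobToFraction_apply]
      simp only [RingEquiv.apply_symm_apply]
      rw [map_mul, map_pow]
      have hp1 : p - 1 + 1 = p := Nat.succ_pred_eq_of_pos (Fact.out : p.Prime).pos
      calc algebraMap A (FractionRing A) d ^ p * FrobAlg.equiv p 1 (FractionRing A) (k' • k)
          = algebraMap A (FractionRing A) d ^ (p - 1) *
            (FrobAlg.equiv p 1 (FractionRing A) (k' • k) * algebraMap A (FractionRing A) d) := by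
            have hpow : (algebraMap A (FractionRing A) d) ^ p =
                (algebraMap A (FractionRing A) d) ^ (p - 1) *
                  algebraMap A (FractionRing A) d := by
              rw [← pow_succ, hp1]
            rw [hpow]; ring
        _ = algebraMap A (FractionRing A) d ^ (p - 1) * algebraMap A (FractionRing A) n := by
            rw [hd]
        _ = _ := rfl

theorem relFrobK_inj_of_relFrobA_inj
    (h : Function.Injective (relFrob p A R)) :
    Function.Injective
      (relFrob p (FractionRing A) (TensorProduct A (FractionRing A) R)) := by
  have key : ∀ z, relFrob p (FractionRing A) (TensorProduct A (FractionRing A) R) z = 0 →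
      z = 0 := by
    intro z hz
    obtain ⟨b, y, hb, hby⟩ := exists_denominator p A R z
    have h1 : relFrob p (FractionRing A) (TensorProduct A (FractionRing A) R)
        (compMap p A R y) = 0 := by
      rw [← hby, map_smul, hz, smul_zero]
    rw [relFrob_compMap] at h1
    have h2 : relFrob p A R y = 0 := by
      apply psiF_inj p A R
      rw [h1, map_zero]
    have h3 : y = 0 := by
      apply h
      rw [h2, map_zero]
    have h4 : (algebraMap A (FractionRing A) b) • z = 0 := by
      rw [hby, h3, map_zero]
    have hb' : algebraMap A (FractionRing A) b ≠ 0 := by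
      rw [map_ne_zero_iff _ (IsFractionRing.injective A (FractionRing A))]
      exact hb
    have := smul_eq_zero.mp h4
    tauto
  intro x y hxy
  have := key (x - y) (by rw [map_sub, hxy, sub_self])
  exact sub_eq_zero.mp this

end Glue

set_option maxHeartbeats 1600000
set_option synthInstance.maxHeartbeats 400000

/-- Dumitrescu-type criterion: for a flat map `A → R` of Noetherian rings of prime
characteristic `p` with `A` a domain with fraction field `K`, the relative Frobenius
`F_{R/A}` is injective if and only if the generic fiber `R ⊗_A K` is geometrically
reduced over `K`. -/
theorem stmt11 (p : ℕ) [Fact p.Prime] (A R : Type*) [CommRing A] [CommRing R]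
    [IsNoetherianRing A] [IsNoetherianRing R] [IsDomain A] [CharP A p] [CharP R p]
    [Algebra A R] [Module.Flat A R] :
    Function.Injective (relFrob p A R) ↔
      GeomReduced (FractionRing A) (TensorProduct A (FractionRing A) R) := by
  haveI hK : CharP (FractionRing A) p :=
    charP_of_injective_algebraMap (IsFractionRing.injective A (FractionRing A)) p
  haveI hS : CharP (TensorProduct A (FractionRing A) R) p :=
    charP_of_injective_ringHom (f := (Algebra.TensorProduct.includeRight
      (R := A) (A := FractionRing A) (B := R)).toRingHom) (includeRight_inj A R) p
  set b := Basis.ofVectorSpace (FractionRing A) (TensorProduct A (FractionRing A) R)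
  constructor
  · intro h
    exact geomReduced_of_linIndep p b
      (linIndep_of_relFrob_inj p b (relFrobK_inj_of_relFrobA_inj p A R h))
  · intro h
    exact relFrobA_inj_of_relFrobK_inj p A R
      (relFrob_inj_of_linIndep p b (linIndep_of_geomReduced p b h))
end
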